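/- Let A be an alphabet and let Z be a set of positions over A each of which has even, positive length. Then Player 1 has a winning strategy for Z if and only if there exists a strategy s₁ of Player 1 such that every play consistent with s₁ belongs to Z_concat, where Z_concat is the set of plays x for which there exists a sequence p₁, p₂, p₃, … of elements of Z such that x is the infinite concatenation p₁ ∘ p₂ ∘ p₃ ∘ ⋯ (i.e., for every k, the concatenation p₁ ∘ ⋯ ∘ p_k is a prefix of x). -/

import Mathlib

open scoped ENNReal

variable {A : Type*}

/-- A position `p` is a prefix of the play `x`. -/
def PrefixOfPlay (p : List A) (x : ℕ → A) : Prop :=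
  List.ofFn (fun i : Fin p.length => x i) = p

/-- The play `x` is consistent with the Player 1 strategy `s₁`. -/
def Consistent1 (s₁ : List A → A) (x : ℕ → A) : Prop :=
  ∀ n : ℕ, x (2 * n) = s₁ (List.ofFn (fun i : Fin (2 * n) => x i))

/-- The play `x` is consistent with the Player 2 strategy `s₂`. -/
def Consistent2 (s₂ : List A → A) (x : ℕ → A) : Prop :=
  ∀ n : ℕ, x (2 * n + 1) = s₂ (List.ofFn (fun i : Fin (2 * n + 1) => x i))

/-- Player 1 has a winning strategy for the open set determined by `Z`. -/
def P1Wins (Z : Set (List A)) : Prop :=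
  ∃ s₁ : List A → A, ∀ x : ℕ → A, Consistent1 s₁ x → ∃ p ∈ Z, PrefixOfPlay p x

/-- Player 2 has a winning strategy for the open set determined by `Z`. -/
def P2Wins (Z : Set (List A)) : Prop :=
  ∃ s₂ : List A → A, ∀ x : ℕ → A, Consistent2 s₂ x → ¬ ∃ p ∈ Z, PrefixOfPlay p x

/-- `x` is an infinite concatenation of elements of `Z`. -/
def ConcatPlay (Z : Set (List A)) (x : ℕ → A) : Prop :=
  ∃ p : ℕ → List A, (∀ k, p k ∈ Z) ∧
    ∀ k : ℕ, PrefixOfPlay (List.flatten (List.ofFn fun i : Fin k => p i)) x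

/-! ### Auxiliary machinery -/

/-- The segment of the play `x` from move `2*a` (inclusive) to move `2*b` (exclusive). -/
def segm (x : ℕ → A) (a b : ℕ) : List A := (List.range' (2*a) (2*b - 2*a)).map x

lemma segm_self (x : ℕ → A) (a : ℕ) : segm x a a = [] := by simp [segm]

lemma segm_append (x : ℕ → A) {a b c : ℕ} (hab : a ≤ b) (hbc : b ≤ c) :
    segm x a b ++ segm x b c = segm x a c := by
  unfold segm
  rw [← List.map_append]
  congr 1
  have h := @List.range'_append (2*a) (2*b - 2*a) (2*c - 2*b) 1
  rw [show 2*a + 1*(2*b - 2*a) = 2*b from by omega,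
    show (2*b - 2*a) + (2*c - 2*b) = 2*c - 2*a from by omega] at h
  exact h

lemma segm_pair (x : ℕ → A) (n : ℕ) : segm x n (n+1) = [x (2*n), x (2*n+1)] := by
  have h : 2*(n+1) - 2*n = 2 := by omega
  simp [segm, h, List.range'_succ]

lemma segm_ofFn (x : ℕ → A) (a m : ℕ) :
    segm x a (a+m) = List.ofFn (fun i : Fin (2*m) => x (2*a + i)) := by
  apply List.ext_getElem
  · simp [segm]; omega
  · intro i h1 h2
    simp [segm, List.getElem_range']

lemma segm_prefix (x : ℕ → A) (b : ℕ) : PrefixOfPlay (segm x 0 b) x := by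
  unfold PrefixOfPlay
  apply List.ext_getElem
  · simp
  · intro i h1 h2
    simp [segm, List.getElem_range']
    rfl

open scoped Classical in
/-- The residual position: the part of the position played since the last completed
`Z`-block. -/
noncomputable def residAux (Z : Set (List A)) : ℕ → (ℕ → A) → List A
  | 0, _ => []
  | n+1, y =>
    if residAux Z n y ++ [y (2*n), y (2*n+1)] ∈ Z then []
    else residAux Z n y ++ [y (2*n), y (2*n+1)]

open scoped Classical in
/-- The position (in rounds) of the last reset. -/
noncomputable def lres (Z : Set (List A)) (x : ℕ → A) : ℕ → ℕ
  | 0 => 0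
  | n+1 => if segm x (lres Z x n) (n+1) ∈ Z then n+1 else lres Z x n

lemma lres_zero (Z : Set (List A)) (x : ℕ → A) : lres Z x 0 = 0 := rfl

lemma lres_succ_or (Z : Set (List A)) (x : ℕ → A) (n : ℕ) :
    lres Z x (n+1) = lres Z x n ∨
      (segm x (lres Z x n) (n+1) ∈ Z ∧ lres Z x (n+1) = n+1) := by
  rw [lres]
  split_ifs with h
  · exact Or.inr ⟨h, rfl⟩
  · exact Or.inl rfl

lemma lres_succ_mem {Z : Set (List A)} {x : ℕ → A} {n : ℕ}
    (h : segm x (lres Z x n) (n+1) ∈ Z) : lres Z x (n+1) = n+1 := by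
  rw [lres]; split_ifs with h' <;> tauto

lemma lres_le (Z : Set (List A)) (x : ℕ → A) : ∀ n, lres Z x n ≤ n := by
  intro n
  induction n with
  | zero => simp [lres_zero]
  | succ n ih =>
    rcases lres_succ_or Z x n with h | ⟨_, h⟩ <;> omega

lemma lres_mono (Z : Set (List A)) (x : ℕ → A) : Monotone (lres Z x) := by
  apply monotone_nat_of_le_succ
  intro n
  rcases lres_succ_or Z x n with h | ⟨_, h⟩
  · omega
  · have := lres_le Z x n; omega

lemma lres_idem (Z : Set (List A)) (x : ℕ → A) : ∀ n, lres Z x (lres Z x n) = lres Z x n := by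
  intro n
  induction n with
  | zero => simp [lres_zero]
  | succ n ih =>
    rcases lres_succ_or Z x n with h | ⟨_, h⟩
    · rw [h]; exact ih
    · rw [h]; exact h

lemma lres_between {Z : Set (List A)} {x : ℕ → A} {a m b : ℕ}
    (hb : lres Z x b = a) (h1 : a ≤ m) (h2 : m ≤ b) : lres Z x m = a := by
  have h3 : lres Z x m ≤ a := hb ▸ lres_mono Z x h2
  have h4 : lres Z x a = a := by
    have := lres_idem Z x b; rw [hb] at this; exact this
  have h5 : a ≤ lres Z x m := h4 ▸ lres_mono Z x h1
  omega

lemma residAux_congr (Z : Set (List A)) :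
    ∀ n (y z : ℕ → A), (∀ i, i < 2*n → y i = z i) → residAux Z n y = residAux Z n z := by
  intro n
  induction n with
  | zero => intro y z _; rfl
  | succ n ih =>
    intro y z h
    have h1 : residAux Z n y = residAux Z n z := ih y z (fun i hi => h i (by omega))
    rw [residAux, residAux, h1, h (2*n) (by omega), h (2*n+1) (by omega)]

lemma residAux_eq_segm (Z : Set (List A)) (x : ℕ → A) :
    ∀ n, residAux Z n x = segm x (lres Z x n) n := by
  intro n
  induction n with
  | zero => rw [lres_zero]; simp [residAux, segm_self]
  | succ n ih =>
    have hseg : segm x (lres Z x n) n ++ [x (2*n), x (2*n+1)] = segm x (lres Z x n) (n+1) := by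
      rw [← segm_pair x n]
      exact segm_append x (lres_le Z x n) (Nat.le_succ n)
    rw [residAux, ih, hseg, lres]
    split_ifs with h
    · rw [segm_self]
    · rfl

/-! ### The main theorem -/

/-- For `Z` consisting of positions of even positive length, Player 1 wins the game with
winning set `W(Z)` iff she has a strategy forcing the play into `Z_concat`. -/
theorem player1_wins_iff_wins_concat (Z : Set (List A))
    (hZ : ∀ p ∈ Z, Even p.length ∧ 0 < p.length) :
    P1Wins Z ↔ ∃ s₁ : List A → A, ∀ x : ℕ → A, Consistent1 s₁ x → ConcatPlay Z x := by
  classical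
  constructor
  · rintro ⟨s₁, hs₁⟩
    refine ⟨fun q => s₁ (residAux Z (q.length / 2) (fun i => q.getD i (s₁ []))), ?_⟩
    intro x hx
    -- key: the play follows `s₁` applied to residual positions
    have key : ∀ n, x (2*n) = s₁ (segm x (lres Z x n) n) := by
      intro n
      rw [← residAux_eq_segm, hx n]
      beta_reduce
      congr 1
      have hlen : (List.ofFn fun i : Fin (2*n) => x i).length = 2*n := by simp
      rw [hlen, Nat.mul_div_cancel_left n (by norm_num)]
      apply residAux_congr
      intro i hi
      rw [List.getD_eq_getElem _ _ (by simpa using hi)]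
      simp
    -- resets happen infinitely often
    have inf : ∀ N : ℕ, ∃ n, N < n ∧ lres Z x n = n := by
      intro N
      by_contra hcon
      push_neg at hcon
      set a := lres Z x N with ha
      have hstabN : ∀ n, N ≤ n → lres Z x n = a := by
        intro n hn
        induction n, hn using Nat.le_induction with
        | base => rfl
        | succ n hn ih =>
          rcases lres_succ_or Z x n with h | ⟨_, h⟩
          · rw [h, ih]
          · exact absurd h (hcon (n+1) (by omega))
      have hstab : ∀ m, a ≤ m → lres Z x m = a := by
        intro m hm
        rcases le_total m N with h' | h'
        · exact lres_between (ha.symm) hm h'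
        · exact hstabN m h'
      -- the tail play is consistent with s₁
      have hcons : Consistent1 s₁ (fun i => x (2*a + i)) := by
        intro m
        have h2 : segm x a (a+m) = List.ofFn (fun i : Fin (2*m) => x (2*a + i)) :=
          segm_ofFn x a m
        have h3 : x (2*a + 2*m) = x (2*(a+m)) := by congr 1; ring
        show x (2*a + 2*m) = s₁ (List.ofFn fun i : Fin (2*m) => x (2*a + ↑i))
        rw [h3, key (a+m), hstab (a+m) (Nat.le_add_right a m), h2]
      obtain ⟨p, hpZ, hpx⟩ := hs₁ _ hcons
      obtain ⟨heven, hpos⟩ := hZ p hpZ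
      obtain ⟨j, hj⟩ := heven
      have hj1 : 1 ≤ j := by omega
      have hpe : segm x a (a+j) = p := by
        rw [segm_ofFn, ← hpx]
        apply List.ext_getElem
        · simp; omega
        · intro i h1 h2; simp
      have hres : lres Z x (a + j) = a + j := by
        have hm : lres Z x (a + j - 1) = a := hstab _ (by omega)
        have hmem : segm x (lres Z x (a + j - 1)) ((a + j - 1) + 1) ∈ Z := by
          rw [hm, show (a + j - 1) + 1 = a + j by omega, hpe]
          exact hpZ
        have := lres_succ_mem hmem
        rwa [show (a + j - 1) + 1 = a + j by omega] at this
      have := hstab (a + j) (by omega)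
      omega
    -- enumerate the reset times
    let t : ℕ → ℕ := fun k => Nat.rec (motive := fun _ => ℕ) 0 (fun _ tk => Nat.find (inf tk)) k
    have ht0 : t 0 = 0 := rfl
    have htsucc : ∀ k, t (k+1) = Nat.find (inf (t k)) := fun _ => rfl
    have htlt : ∀ k, t k < t (k+1) := fun k => (Nat.find_spec (inf (t k))).1
    have htres : ∀ k, lres Z x (t k) = t k := by
      intro k
      cases k with
      | zero => rw [ht0]; exact lres_zero Z x
      | succ k => exact (Nat.find_spec (inf (t k))).2
    have htmin : ∀ k m, t k < m → m < t (k+1) → lres Z x m ≠ m := by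
      intro k m h1 h2 hm
      exact Nat.find_min (inf (t k)) h2 ⟨h1, hm⟩
    have hbetween : ∀ k m, t k ≤ m → m < t (k+1) → lres Z x m = t k := by
      intro k m hm hm'
      induction m, hm using Nat.le_induction with
      | base => exact htres k
      | succ m hm ih =>
        rcases lres_succ_or Z x m with h | ⟨_, h⟩
        · rw [h, ih (by omega)]
        · exact absurd (h) (by intro hh; exact htmin k (m+1) (by omega) hm' (by rw [hh]))
    have hblock : ∀ k, segm x (t k) (t (k+1)) ∈ Z := by
      intro k
      obtain ⟨m, hm⟩ : ∃ m, t (k+1) = m + 1 := ⟨t (k+1) - 1, by have := htlt k; omega⟩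
      have h1 : lres Z x (m+1) = m+1 := by rw [← hm]; exact htres (k+1)
      have h2 : lres Z x m = t k := by
        apply hbetween k m
        · have := htlt k; omega
        · omega
      rcases lres_succ_or Z x m with h | ⟨hmem, _⟩
      · rw [h1, h2] at h
        have := htlt k; omega
      · rw [h2, ← hm] at hmem
        exact hmem
    have hflat : ∀ k,
        List.flatten (List.ofFn fun i : Fin k => segm x (t i) (t (i+1))) = segm x 0 (t k) := by
      intro k
      induction k with
      | zero => simp [ht0, segm_self]
      | succ k ih =>
        rw [List.ofFn_succ']
        simp only [List.concat_eq_append, List.flatten_append, List.flatten_cons,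
          List.flatten_nil, List.append_nil, Fin.coe_castSucc, Fin.val_last]
        rw [ih]
        exact segm_append x (Nat.zero_le _) (htlt k).le
    exact ⟨fun k => segm x (t k) (t (k+1)), hblock, fun k => by
      rw [hflat k]; exact segm_prefix x (t k)⟩
  · rintro ⟨s₁, hs₁⟩
    refine ⟨s₁, fun x hx => ?_⟩
    obtain ⟨p, hpZ, hpre⟩ := hs₁ x hx
    have e : List.flatten (List.ofFn fun i : Fin 1 => p i) = p 0 := by simp
    have := hpre 1
    rw [e] at this
    exact ⟨p 0, hpZ 0, this⟩
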